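/- Entropy sandwich for mixtures: for a finite ensemble of density matrices ρ_i with probabilities p_i, Σ_i p_i S(ρ_i) ≤ S(Σ_i p_i ρ_i) ≤ Σ_i p_i S(ρ_i) + H(p), where S is von Neumann entropy and H(p) = −Σ_i p_i log p_i is the Shannon entropy of the weights. -/

import Mathlib

open Matrix ComplexOrder

noncomputable def vnEntropy {d : ℕ} (ρ : Matrix (Fin d) (Fin d) ℂ)
    (h : ρ.IsHermitian) : ℝ :=
  ∑ i, Real.negMulLog (h.eigenvalues i)

lemma jensen_negMulLog {κ : Type*} [Fintype κ] (w x : κ → ℝ) (hw : ∀ k, 0 ≤ w k)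
    (hx : ∀ k, 0 ≤ x k) (hsum : ∑ k, w k ≤ 1) :
    ∑ k, w k * Real.negMulLog (x k) ≤ Real.negMulLog (∑ k, w k * x k) := by
  have h := Real.concaveOn_negMulLog.map_add_sum_le (t := (Finset.univ : Finset κ))
    (w := w) (p := x) (v := 1 - ∑ k, w k) (q := 0)
    (fun k _ => hw k) (by ring) (fun k _ => hx k) (by linarith) Set.self_mem_Ici
  simpa [Real.negMulLog_zero, smul_eq_mul] using h

theorem entropy_sandwich {ι : Type*} [Fintype ι] {d : ℕ}
    (p : ι → ℝ) (ρ : ι → Matrix (Fin d) (Fin d) ℂ)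
    (hρ : ∀ i, (ρ i).PosSemidef) (htr : ∀ i, (ρ i).trace = 1)
    (hp : ∀ i, 0 ≤ p i) (hpsum : ∑ i, p i = 1)
    (hmix : (∑ i, ((p i : ℂ) • ρ i)).IsHermitian) :
    ∑ i, p i * vnEntropy (ρ i) (hρ i).isHermitian ≤ vnEntropy _ hmix ∧
      vnEntropy _ hmix ≤
        ∑ i, p i * vnEntropy (ρ i) (hρ i).isHermitian + ∑ i, Real.negMulLog (p i) := by
  classical
  set W : Matrix (Fin d) (Fin d) ℂ := (hmix.eigenvectorUnitary : Matrix (Fin d) (Fin d) ℂ) with hWdef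
  set lam : Fin d → ℝ := hmix.eigenvalues with hlamdef
  set V : ι → Matrix (Fin d) (Fin d) ℂ :=
    fun i => ((hρ i).isHermitian.eigenvectorUnitary : Matrix (Fin d) (Fin d) ℂ) with hVdef
  set a : ι → Fin d → ℝ := fun i => (hρ i).isHermitian.eigenvalues with hadef
  set M : ι → Matrix (Fin d) (Fin d) ℂ := fun i => star W * V i with hMdef
  set E : ι → Fin d → Fin d → ℝ := fun i j m => Complex.normSq (M i m j) with hEdef
  have ha0 : ∀ i j, 0 ≤ a i j := fun i j => (hρ i).eigenvalues_nonneg j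
  have hE0 : ∀ i j m, 0 ≤ E i j m := fun i j m => Complex.normSq_nonneg _
  -- unitary facts
  have hWW : W * star W = 1 := mem_unitaryGroup_iff.mp hmix.eigenvectorUnitary.2
  have hWW' : star W * W = 1 := mem_unitaryGroup_iff'.mp hmix.eigenvectorUnitary.2
  have hVV : ∀ i, V i * star (V i) = 1 :=
    fun i => mem_unitaryGroup_iff.mp (hρ i).isHermitian.eigenvectorUnitary.2
  have hVV' : ∀ i, star (V i) * V i = 1 :=
    fun i => mem_unitaryGroup_iff'.mp (hρ i).isHermitian.eigenvectorUnitary.2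
  -- K1 : columns of M i orthonormal
  have K1 : ∀ i, star (M i) * M i = 1 := by
    intro i
    have : star (M i) * M i = star (V i) * (W * star W) * V i := by
      simp only [hMdef, StarMul.star_mul, star_star, Matrix.mul_assoc]
    rw [this, hWW, Matrix.mul_one, hVV']
  have K2 : ∀ i, M i * star (M i) = 1 := by
    intro i
    have : M i * star (M i) = star W * (V i * star (V i)) * W := by
      simp only [hMdef, StarMul.star_mul, star_star, Matrix.mul_assoc]
    rw [this, hVV, Matrix.mul_one, hWW']
  -- row/column sums of E
  have F1 : ∀ i j, ∑ m, E i j m = 1 := by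
    intro i j
    have h := congrArg (fun N : Matrix (Fin d) (Fin d) ℂ => N j j) (K1 i)
    simp only [Matrix.mul_apply, Matrix.star_apply, Matrix.one_apply_eq] at h
    have h2 : ((∑ m, E i j m : ℝ) : ℂ) = 1 := by
      push_cast
      rw [← h]
      exact Finset.sum_congr rfl fun m _ => Complex.normSq_eq_conj_mul_self
    exact_mod_cast h2
  have F2 : ∀ i m, ∑ j, E i j m = 1 := by
    intro i m
    have h := congrArg (fun N : Matrix (Fin d) (Fin d) ℂ => N m m) (K2 i)
    simp only [Matrix.mul_apply, Matrix.star_apply, Matrix.one_apply_eq] at h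
    have h2 : ((∑ j, E i j m : ℝ) : ℂ) = 1 := by
      push_cast
      rw [← h]
      exact Finset.sum_congr rfl fun j _ => (Complex.mul_conj _).symm
    exact_mod_cast h2
  -- C3 : the key diagonalization identity, complex form
  have C3 : ∀ m m', ∑ i, (p i : ℂ) * ∑ j, (a i j : ℂ) *
      (M i m j * (starRingEnd ℂ) (M i m' j)) = if m = m' then (lam m : ℂ) else 0 := by
    have hdiag : star W * (∑ i, ((p i : ℂ) • ρ i)) * W = diagonal (RCLike.ofReal ∘ lam) :=
      by have := hmix.conjStarAlgAut_star_eigenvectorUnitary; rwa [Unitary.conjStarAlgAut_star_apply] at this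
    have hconj : ∀ i, star W * ρ i * W
        = M i * diagonal (RCLike.ofReal ∘ a i) * star (M i) := by
      intro i
      rw [(hρ i).isHermitian.spectral_theorem, Unitary.conjStarAlgAut_apply]
      simp only [hMdef, StarMul.star_mul, star_star, Matrix.mul_assoc, hVdef, hadef]
    have hsum : (∑ i, (p i : ℂ) • (M i * diagonal (RCLike.ofReal ∘ a i) * star (M i)))
        = diagonal (RCLike.ofReal ∘ lam) := by
      rw [← hdiag, Matrix.mul_sum, Matrix.sum_mul]
      refine Finset.sum_congr rfl fun i _ => ?_
      rw [← hconj i]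
      simp only [Matrix.smul_mul, Matrix.mul_smul]
    intro m m'
    have h := congrArg (fun N : Matrix (Fin d) (Fin d) ℂ => N m m') hsum
    simp only [Matrix.sum_apply, Matrix.smul_apply, Matrix.diagonal_apply, smul_eq_mul,
      Matrix.mul_apply, Matrix.star_apply, Matrix.mul_diagonal, Function.comp_apply,
      mul_ite, mul_zero, ite_mul, zero_mul, Finset.sum_ite_eq, Finset.sum_ite_eq',
      Finset.mem_univ, if_true, RCLike.star_def] at h
    simp only [show ∀ x : ℝ, (RCLike.ofReal x : ℂ) = (x : ℂ) from fun _ => rfl] at h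
    rw [← h]
    refine Finset.sum_congr rfl fun i _ => ?_
    congr 1
    refine Finset.sum_congr rfl fun j _ => ?_
    ring
  have F3 : ∀ m, lam m = ∑ i, p i * ∑ j, a i j * E i j m := by
    intro m
    have h := C3 m m
    rw [if_pos rfl] at h
    have h2 : ((∑ i, p i * ∑ j, a i j * E i j m : ℝ) : ℂ) = (lam m : ℂ) := by
      push_cast
      rw [← h]
      refine Finset.sum_congr rfl fun i _ => ?_
      congr 1
      refine Finset.sum_congr rfl fun j _ => ?_
      rw [Complex.mul_conj]
    exact_mod_cast h2.symm
  have hlam0 : ∀ m, 0 ≤ lam m := by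
    intro m
    rw [F3 m]
    exact Finset.sum_nonneg fun i _ => mul_nonneg (hp i)
      (Finset.sum_nonneg fun j _ => mul_nonneg (ha0 i j) (hE0 i j m))
  have hasum : ∀ i, ∑ j, a i j = 1 := by
    intro i
    have h := htr i
    rw [(hρ i).isHermitian.spectral_theorem, Unitary.conjStarAlgAut_apply, Matrix.trace_mul_cycle, hVV' i, Matrix.one_mul,
      Matrix.trace_diagonal] at h
    have h2 : ((∑ j, a i j : ℝ) : ℂ) = 1 := by
      push_cast
      rw [← h]
      rfl
    exact_mod_cast h2
  have hSmix : vnEntropy _ hmix = ∑ m, Real.negMulLog (lam m) := rfl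
  have hSi : ∀ i, vnEntropy (ρ i) (hρ i).isHermitian = ∑ j, Real.negMulLog (a i j) :=
    fun i => rfl
  -- ===== LOWER BOUND =====
  have lower : ∑ i, p i * vnEntropy (ρ i) (hρ i).isHermitian ≤ vnEntropy _ hmix := by
    have key : ∀ m, ∑ i, p i * ∑ j, E i j m * Real.negMulLog (a i j)
        ≤ Real.negMulLog (lam m) := by
      intro m
      have hJ := jensen_negMulLog (κ := ι × Fin d) (fun k => p k.1 * E k.1 k.2 m)
        (fun k => a k.1 k.2)
        (fun k => mul_nonneg (hp k.1) (hE0 _ _ _)) (fun k => ha0 _ _)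
        (by
          rw [Fintype.sum_prod_type]
          have : ∀ i, ∑ j, p i * E i j m = p i := by
            intro i
            rw [← Finset.mul_sum, F2 i m, mul_one]
          rw [Finset.sum_congr rfl fun i _ => this i, hpsum])
      have hL : ∑ k : ι × Fin d, p k.1 * E k.1 k.2 m * Real.negMulLog (a k.1 k.2)
          = ∑ i, p i * ∑ j, E i j m * Real.negMulLog (a i j) := by
        rw [Fintype.sum_prod_type]
        refine Finset.sum_congr rfl fun i _ => ?_
        rw [Finset.mul_sum]
        exact Finset.sum_congr rfl fun j _ => by ring
      have hR : ∑ k : ι × Fin d, p k.1 * E k.1 k.2 m * a k.1 k.2 = lam m := by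
        rw [Fintype.sum_prod_type, F3 m]
        refine Finset.sum_congr rfl fun i _ => ?_
        rw [Finset.mul_sum]
        exact Finset.sum_congr rfl fun j _ => by ring
      rw [hL, hR] at hJ
      exact hJ
    have hcol : ∀ i, ∑ m, p i * ∑ j, E i j m * Real.negMulLog (a i j)
        = p i * ∑ j, Real.negMulLog (a i j) := by
      intro i
      calc ∑ m, p i * ∑ j, E i j m * Real.negMulLog (a i j)
          = ∑ m, ∑ j, p i * (E i j m * Real.negMulLog (a i j)) := by
            exact Finset.sum_congr rfl fun m _ => Finset.mul_sum _ _ _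
        _ = ∑ j, ∑ m, p i * (E i j m * Real.negMulLog (a i j)) := Finset.sum_comm
        _ = ∑ j, (∑ m, E i j m) * (p i * Real.negMulLog (a i j)) := by
            refine Finset.sum_congr rfl fun j _ => ?_
            rw [Finset.sum_mul]
            exact Finset.sum_congr rfl fun m _ => by ring
        _ = ∑ j, p i * Real.negMulLog (a i j) := by
            refine Finset.sum_congr rfl fun j _ => ?_
            rw [F1 i j, one_mul]
        _ = p i * ∑ j, Real.negMulLog (a i j) := (Finset.mul_sum _ _ _).symm
    calc ∑ i, p i * vnEntropy (ρ i) (hρ i).isHermitian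
        = ∑ i, ∑ m, p i * ∑ j, E i j m * Real.negMulLog (a i j) := by
          refine Finset.sum_congr rfl fun i _ => ?_
          rw [hSi i, hcol i]
      _ = ∑ m, ∑ i, p i * ∑ j, E i j m * Real.negMulLog (a i j) := Finset.sum_comm
      _ ≤ ∑ m, Real.negMulLog (lam m) := Finset.sum_le_sum fun m _ => key m
      _ = vnEntropy _ hmix := hSmix.symm
  -- ===== UPPER BOUND =====
  set w : ι × Fin d → ℝ := fun k => p k.1 * a k.1 k.2 with hwdef
  have hw0 : ∀ k, 0 ≤ w k := fun k => mul_nonneg (hp _) (ha0 _ _)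
  set s : Fin d → ℝ := fun m => if lam m = 0 then 0 else 1 / Real.sqrt (lam m) with hsdef
  have hs2 : ∀ m, lam m ≠ 0 → s m * s m * lam m = 1 := by
    intro m hm
    have hpos : 0 < lam m := lt_of_le_of_ne (hlam0 m) (Ne.symm hm)
    rw [hsdef]
    simp only [if_neg hm]
    rw [div_mul_div_comm, one_mul, Real.mul_self_sqrt (hlam0 m)]
    field_simp
  set U : Matrix (ι × Fin d) (Fin d) ℂ :=
    Matrix.of (fun k m => ((Real.sqrt (w k) * s m : ℝ) : ℂ) * M k.1 m k.2) with hUdef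
  set χ : Fin d → ℂ := fun m => if lam m = 0 then (0 : ℂ) else 1 with hχdef
  have hQ : Uᴴ * U = diagonal χ := by
    ext m m'
    rw [Matrix.mul_apply, Matrix.diagonal_apply]
    have key : ∀ k : ι × Fin d, Uᴴ m k * U k m'
        = ((s m * s m' : ℝ) : ℂ) * ((p k.1 : ℂ) * ((a k.1 k.2 : ℂ)
            * (M k.1 m' k.2 * (starRingEnd ℂ) (M k.1 m k.2)))) := by
      intro k
      have h2 : Real.sqrt (w k) * Real.sqrt (w k) = p k.1 * a k.1 k.2 :=
        Real.mul_self_sqrt (hw0 k)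
      have h1 : Real.sqrt (w k) * s m * (Real.sqrt (w k) * s m')
          = s m * s m' * (p k.1 * a k.1 k.2) := by
        calc Real.sqrt (w k) * s m * (Real.sqrt (w k) * s m')
            = Real.sqrt (w k) * Real.sqrt (w k) * (s m * s m') := by ring
          _ = p k.1 * a k.1 k.2 * (s m * s m') := by rw [h2]
          _ = s m * s m' * (p k.1 * a k.1 k.2) := by ring
      calc Uᴴ m k * U k m'
          = ((Real.sqrt (w k) * s m : ℝ) : ℂ) * (starRingEnd ℂ) (M k.1 m k.2)
              * (((Real.sqrt (w k) * s m' : ℝ) : ℂ) * M k.1 m' k.2) := by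
            rw [hUdef, Matrix.conjTranspose_apply, Matrix.of_apply, Matrix.of_apply]
            rw [star_mul', Complex.star_def, Complex.conj_ofReal]
        _ = ((Real.sqrt (w k) * s m * (Real.sqrt (w k) * s m') : ℝ) : ℂ)
              * (M k.1 m' k.2 * (starRingEnd ℂ) (M k.1 m k.2)) := by
            push_cast
            ring
        _ = ((s m * s m' * (p k.1 * a k.1 k.2) : ℝ) : ℂ)
              * (M k.1 m' k.2 * (starRingEnd ℂ) (M k.1 m k.2)) := by rw [h1]
        _ = _ := by push_cast; ring
    calc ∑ k : ι × Fin d, Uᴴ m k * U k m'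
        = ∑ k : ι × Fin d, ((s m * s m' : ℝ) : ℂ) * ((p k.1 : ℂ) * ((a k.1 k.2 : ℂ)
            * (M k.1 m' k.2 * (starRingEnd ℂ) (M k.1 m k.2)))) :=
          Finset.sum_congr rfl fun k _ => key k
      _ = ((s m * s m' : ℝ) : ℂ) * ∑ i, (p i : ℂ) * ∑ j, (a i j : ℂ)
            * (M i m' j * (starRingEnd ℂ) (M i m j)) := by
          rw [Finset.mul_sum, Fintype.sum_prod_type]
          refine Finset.sum_congr rfl fun i _ => ?_
          rw [Finset.mul_sum, Finset.mul_sum]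
      _ = ((s m * s m' : ℝ) : ℂ) * (if m' = m then ((lam m' : ℝ) : ℂ) else 0) := by
          rw [C3 m' m]
      _ = (if m = m' then χ m else 0) := by
          by_cases hmm : m = m'
          · subst hmm
            rw [if_pos rfl, if_pos rfl, hχdef]
            by_cases hm : lam m = 0
            · simp [hsdef, hm]
            · simp only [if_neg hm]
              rw [← Complex.ofReal_mul, ← Complex.ofReal_one, Complex.ofReal_inj]
              exact hs2 m hm
          · rw [if_neg hmm, if_neg (fun h => hmm h.symm), mul_zero]
  have hUchi : U * diagonal χ = U := by
    ext k m
    rw [Matrix.mul_diagonal]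
    by_cases hm : lam m = 0
    · have : U k m = 0 := by
        rw [hUdef, Matrix.of_apply, hsdef]
        simp [hm]
      rw [this, zero_mul]
    · rw [hχdef]
      simp only [if_neg hm, mul_one]
  set P : Matrix (ι × Fin d) (ι × Fin d) ℂ := U * Uᴴ with hPdef
  have hPP : P * P = P := by
    calc P * P = U * (Uᴴ * U) * Uᴴ := by
          rw [hPdef, Matrix.mul_assoc, Matrix.mul_assoc, Matrix.mul_assoc]
      _ = U * diagonal χ * Uᴴ := by rw [hQ]
      _ = P := by rw [hUchi, hPdef]
  have hPconj : ∀ k l, (starRingEnd ℂ) (P k l) = P l k := by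
    intro k l
    have : Pᴴ = P := by rw [hPdef, Matrix.conjTranspose_mul, Matrix.conjTranspose_conjTranspose]
    have h2 := congrArg (fun N : Matrix (ι × Fin d) (ι × Fin d) ℂ => N l k) this
    simpa [Matrix.conjTranspose_apply] using h2
  -- the rank bound : row sums of |U|² are ≤ 1
  have hrow : ∀ k : ι × Fin d, ∑ m, Complex.normSq (U k m) ≤ 1 := by
    intro k
    have hPkk : P k k = ((∑ m, Complex.normSq (U k m) : ℝ) : ℂ) := by
      rw [hPdef, Matrix.mul_apply]
      push_cast
      refine Finset.sum_congr rfl fun m _ => ?_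
      rw [Matrix.conjTranspose_apply, Complex.star_def, Complex.mul_conj]
    have hPsq : P k k = ((∑ l, Complex.normSq (P k l) : ℝ) : ℂ) := by
      have h := congrArg (fun N : Matrix (ι × Fin d) (ι × Fin d) ℂ => N k k) hPP
      simp only [Matrix.mul_apply] at h
      rw [← h]
      push_cast
      refine Finset.sum_congr rfl fun l _ => ?_
      rw [← hPconj k l, Complex.mul_conj]
    set r : ℝ := ∑ m, Complex.normSq (U k m) with hrdef
    have hr0 : 0 ≤ r := Finset.sum_nonneg fun m _ => Complex.normSq_nonneg _
    have hrr : r = ∑ l, Complex.normSq (P k l) := by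
      have := hPkk.symm.trans hPsq
      exact_mod_cast this
    have hge : Complex.normSq (P k k) ≤ r := by
      rw [hrr]
      exact Finset.single_le_sum (fun l _ => Complex.normSq_nonneg _) (Finset.mem_univ k)
    have hPkksq : Complex.normSq (P k k) = r * r := by
      rw [hPkk, Complex.normSq_ofReal]
    nlinarith
  -- B coefficients
  set B : ι × Fin d → Fin d → ℝ :=
    fun k m => if lam m = 0 then 0 else w k * E k.1 k.2 m / lam m with hBdef
  have hB0 : ∀ k m, 0 ≤ B k m := by
    intro k m
    rw [hBdef]
    by_cases hm : lam m = 0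
    · simp [hm]
    · simp only [if_neg hm]
      exact div_nonneg (mul_nonneg (hw0 k) (hE0 _ _ _)) (hlam0 m)
  have hBU : ∀ k m, B k m = Complex.normSq (U k m) := by
    intro k m
    rw [hUdef, Matrix.of_apply, Complex.normSq_mul, Complex.normSq_ofReal]
    by_cases hm : lam m = 0
    · rw [hBdef]
      simp [hsdef, hm]
    · rw [hBdef]
      simp only [if_neg hm]
      rw [hsdef]
      simp only [if_neg hm]
      have h2 : Real.sqrt (w k) * (1 / Real.sqrt (lam m))
          * (Real.sqrt (w k) * (1 / Real.sqrt (lam m))) = w k / lam m := by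
        calc Real.sqrt (w k) * (1 / Real.sqrt (lam m))
              * (Real.sqrt (w k) * (1 / Real.sqrt (lam m)))
            = Real.sqrt (w k) * Real.sqrt (w k)
              * (1 / (Real.sqrt (lam m) * Real.sqrt (lam m))) := by ring
          _ = w k * (1 / lam m) := by
              rw [Real.mul_self_sqrt (hw0 k), Real.mul_self_sqrt (hlam0 m)]
          _ = w k / lam m := by ring
      rw [h2, hEdef]
      ring
  have hG3 : ∀ k, ∑ m, B k m ≤ 1 := by
    intro k
    calc ∑ m, B k m = ∑ m, Complex.normSq (U k m) :=
          Finset.sum_congr rfl fun m _ => hBU k m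
      _ ≤ 1 := hrow k
  -- w k * E = 0 when lam m = 0
  have hterm_le : ∀ (k : ι × Fin d) m, w k * E k.1 k.2 m ≤ lam m := by
    intro k m
    rw [F3 m]
    have h1 : a k.1 k.2 * E k.1 k.2 m ≤ ∑ j, a k.1 j * E k.1 j m :=
      Finset.single_le_sum (f := fun j => a k.1 j * E k.1 j m)
        (fun j _ => mul_nonneg (ha0 _ _) (hE0 _ _ _)) (Finset.mem_univ k.2)
    have h2 : p k.1 * ∑ j, a k.1 j * E k.1 j m ≤ ∑ i, p i * ∑ j, a i j * E i j m :=
      Finset.single_le_sum (f := fun i => p i * ∑ j, a i j * E i j m)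
        (fun i _ => mul_nonneg (hp i)
          (Finset.sum_nonneg fun j _ => mul_nonneg (ha0 _ _) (hE0 _ _ _)))
        (Finset.mem_univ k.1)
    calc w k * E k.1 k.2 m = p k.1 * (a k.1 k.2 * E k.1 k.2 m) := by rw [hwdef]; ring
      _ ≤ p k.1 * ∑ j, a k.1 j * E k.1 j m := mul_le_mul_of_nonneg_left h1 (hp _)
      _ ≤ _ := h2
  have hzero : ∀ (k : ι × Fin d) m, lam m = 0 → w k * E k.1 k.2 m = 0 := by
    intro k m hm
    have h1 := hterm_le k m
    rw [hm] at h1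
    exact le_antisymm h1 (mul_nonneg (hw0 k) (hE0 _ _ _))
  -- each B-weighted sum of lam gives w
  have hBlam : ∀ k, ∑ m, B k m * lam m = w k := by
    intro k
    have : ∀ m, B k m * lam m = w k * E k.1 k.2 m := by
      intro m
      rw [hBdef]
      by_cases hm : lam m = 0
      · simp only [if_pos hm, zero_mul]
        exact (hzero k m hm).symm
      · simp only [if_neg hm]
        field_simp
    rw [Finset.sum_congr rfl fun m _ => this m, ← Finset.mul_sum, F1, mul_one]
  -- column sums of B are 1 (on support)
  have hBcol : ∀ m, Real.negMulLog (lam m) = ∑ k : ι × Fin d, B k m * Real.negMulLog (lam m) := by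
    intro m
    by_cases hm : lam m = 0
    · rw [hm]
      simp [Real.negMulLog_zero]
    · have hsum : ∑ k : ι × Fin d, B k m = 1 := by
        have h1 : ∑ k : ι × Fin d, B k m = (∑ k : ι × Fin d, w k * E k.1 k.2 m) / lam m := by
          rw [Finset.sum_div]
          refine Finset.sum_congr rfl fun k _ => ?_
          rw [hBdef]
          simp only [if_neg hm]
        have h2 : ∑ k : ι × Fin d, w k * E k.1 k.2 m = lam m := by
          rw [Fintype.sum_prod_type, F3 m]
          refine Finset.sum_congr rfl fun i _ => ?_
          rw [Finset.mul_sum]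
          refine Finset.sum_congr rfl fun j _ => ?_
          rw [hwdef]
          ring
        rw [h1, h2, div_self hm]
      rw [← Finset.sum_mul, hsum, one_mul]
  -- final entropy computation for w
  have hwent : ∑ k : ι × Fin d, Real.negMulLog (w k)
      = ∑ i, p i * vnEntropy (ρ i) (hρ i).isHermitian + ∑ i, Real.negMulLog (p i) := by
    rw [Fintype.sum_prod_type]
    have : ∀ i, ∑ j, Real.negMulLog (w (i, j))
        = p i * vnEntropy (ρ i) (hρ i).isHermitian + Real.negMulLog (p i) := by
      intro i
      have hterm : ∀ j, Real.negMulLog (w (i, j))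
          = a i j * Real.negMulLog (p i) + p i * Real.negMulLog (a i j) := by
        intro j
        rw [hwdef]
        exact Real.negMulLog_mul _ _
      rw [Finset.sum_congr rfl fun j _ => hterm j, Finset.sum_add_distrib,
        ← Finset.sum_mul, hasum i, one_mul, ← Finset.mul_sum, ← hSi i]
      ring
    rw [Finset.sum_congr rfl fun i _ => this i, Finset.sum_add_distrib]
  -- assemble
  refine ⟨lower, ?_⟩
  calc vnEntropy _ hmix = ∑ m, Real.negMulLog (lam m) := hSmix
    _ = ∑ m, ∑ k : ι × Fin d, B k m * Real.negMulLog (lam m) :=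
        Finset.sum_congr rfl fun m _ => hBcol m
    _ = ∑ k : ι × Fin d, ∑ m, B k m * Real.negMulLog (lam m) := Finset.sum_comm
    _ ≤ ∑ k : ι × Fin d, Real.negMulLog (∑ m, B k m * lam m) :=
        Finset.sum_le_sum fun k _ =>
          jensen_negMulLog (B k) lam (hB0 k) hlam0 (hG3 k)
    _ = ∑ k : ι × Fin d, Real.negMulLog (w k) :=
        Finset.sum_congr rfl fun k _ => by rw [hBlam k]
    _ = _ := hwent
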